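/- If γ : ℝ → M₂ is C¹, then the Märzke-Wheeler map Ω_γ satisfies the M₂-holomorphy (Cauchy-Riemann-type) equation ∂₀Ω_γ = σ · ∂₁Ω_γ, where ∂₀ is the derivative in the time coordinate s and ∂₁ in the space coordinate x. -/

import Mathlib

/-- Märzke-Wheeler map of a curve γ : ℝ → M₂, at the point s + xσ (time s, space x):
Ω_γ(s + xσ) = (γ(s+x) + γ(s−x))/2 + ((γ(s+x) − γ(s−x))/2)·σ,
where multiplication by σ swaps the two real coordinates. -/
noncomputable def Omega (γ : ℝ → ℝ × ℝ) (p : ℝ × ℝ) : ℝ × ℝ :=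
  ((γ (p.1 + p.2)).1 / 2 + (γ (p.1 - p.2)).1 / 2 + ((γ (p.1 + p.2)).2 / 2 - (γ (p.1 - p.2)).2 / 2),
   (γ (p.1 + p.2)).2 / 2 + (γ (p.1 - p.2)).2 / 2 + ((γ (p.1 + p.2)).1 / 2 - (γ (p.1 - p.2)).1 / 2))

/-- Partial derivative in the first (time) coordinate. -/
noncomputable def pd0 (F : ℝ × ℝ → ℝ × ℝ) (p : ℝ × ℝ) : ℝ × ℝ :=
  deriv (fun s => F (s, p.2)) p.1

/-- Partial derivative in the second (space) coordinate. -/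
noncomputable def pd1 (F : ℝ × ℝ → ℝ × ℝ) (p : ℝ × ℝ) : ℝ × ℝ :=
  deriv (fun x => F (p.1, x)) p.2

/-- For a C¹ curve γ, the Märzke-Wheeler map satisfies ∂₀Ω_γ = σ·∂₁Ω_γ
(multiplication by σ swaps the two coordinates). -/
theorem omega_holomorphic (γ : ℝ → ℝ × ℝ) (hγ : ContDiff ℝ 1 γ) (p : ℝ × ℝ) :
    pd0 (Omega γ) p = ((pd1 (Omega γ) p).2, (pd1 (Omega γ) p).1) := by
  have hd : Differentiable ℝ γ := hγ.differentiable one_ne_zero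
  have h1 : Differentiable ℝ (fun t => (γ t).1) := hd.fst
  have h2 : Differentiable ℝ (fun t => (γ t).2) := hd.snd
  set a := p.1 + p.2 with ha
  set b := p.1 - p.2 with hb
  set d1a := deriv (fun t => (γ t).1) a
  set d1b := deriv (fun t => (γ t).1) b
  set d2a := deriv (fun t => (γ t).2) a
  set d2b := deriv (fun t => (γ t).2) b
  -- derivatives of inner maps for pd0: s ↦ s + p.2 and s ↦ s - p.2
  have hA0 : HasDerivAt (fun s : ℝ => (γ (s + p.2)).1) d1a p.1 := by
    have := ((h1 a).hasDerivAt).comp p.1 ((hasDerivAt_id p.1).add_const p.2)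
    simpa [Function.comp_def] using this
  have hB0 : HasDerivAt (fun s : ℝ => (γ (s - p.2)).1) d1b p.1 := by
    have := ((h1 b).hasDerivAt).comp p.1 ((hasDerivAt_id p.1).sub_const p.2)
    simpa [Function.comp_def] using this
  have hA0' : HasDerivAt (fun s : ℝ => (γ (s + p.2)).2) d2a p.1 := by
    have := ((h2 a).hasDerivAt).comp p.1 ((hasDerivAt_id p.1).add_const p.2)
    simpa [Function.comp_def] using this
  have hB0' : HasDerivAt (fun s : ℝ => (γ (s - p.2)).2) d2b p.1 := by
    have := ((h2 b).hasDerivAt).comp p.1 ((hasDerivAt_id p.1).sub_const p.2)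
    simpa [Function.comp_def] using this
  -- derivatives for pd1: x ↦ p.1 + x and x ↦ p.1 - x
  have hA1 : HasDerivAt (fun x : ℝ => (γ (p.1 + x)).1) d1a p.2 := by
    have := ((h1 a).hasDerivAt).comp p.2 ((hasDerivAt_id p.2).const_add p.1)
    rw [mul_one] at this; exact this
  have hB1 : HasDerivAt (fun x : ℝ => (γ (p.1 - x)).1) (-d1b) p.2 := by
    have := ((h1 b).hasDerivAt).comp p.2 ((hasDerivAt_id p.2).const_sub p.1)
    simpa [Function.comp_def] using this
  have hA1' : HasDerivAt (fun x : ℝ => (γ (p.1 + x)).2) d2a p.2 := by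
    have := ((h2 a).hasDerivAt).comp p.2 ((hasDerivAt_id p.2).const_add p.1)
    rw [mul_one] at this; exact this
  have hB1' : HasDerivAt (fun x : ℝ => (γ (p.1 - x)).2) (-d2b) p.2 := by
    have := ((h2 b).hasDerivAt).comp p.2 ((hasDerivAt_id p.2).const_sub p.1)
    simpa [Function.comp_def] using this
  have hpd0 : HasDerivAt (fun s : ℝ => Omega γ (s, p.2))
      (d1a / 2 + d1b / 2 + (d2a / 2 - d2b / 2),
       d2a / 2 + d2b / 2 + (d1a / 2 - d1b / 2)) p.1 := by
    exact (((hA0.div_const 2).add (hB0.div_const 2)).add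
        ((hA0'.div_const 2).sub (hB0'.div_const 2))).prodMk
      ((((hA0'.div_const 2).add (hB0'.div_const 2)).add
        ((hA0.div_const 2).sub (hB0.div_const 2))))
  have hpd1 : HasDerivAt (fun x : ℝ => Omega γ (p.1, x))
      (d1a / 2 + (-d1b) / 2 + (d2a / 2 - (-d2b) / 2),
       d2a / 2 + (-d2b) / 2 + (d1a / 2 - (-d1b) / 2)) p.2 := by
    exact (((hA1.div_const 2).add (hB1.div_const 2)).add
        ((hA1'.div_const 2).sub (hB1'.div_const 2))).prodMk
      ((((hA1'.div_const 2).add (hB1'.div_const 2)).add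
        ((hA1.div_const 2).sub (hB1.div_const 2))))
  rw [pd0, pd1, hpd0.deriv, hpd1.deriv]
  simp only [Prod.mk.injEq]; constructor <;> ring
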